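/- Let k ≥ 3 and n ≥ 3(k-1). In the Johnson scheme J(n,k), let λ₀(j) = (-1)^j·C(n-k-j, k-j) and λ₁(j) = (-1)^j·C(n-k-j, k-j)·((n-k-j+1)(k-j)/(n-2k+1) - k). With ε₀ = -k²ε₁/(n-2k+1) + (k(k-1)/(2n(n-1)))·C(n,k)/C(n-k,k), γ₀ = k²ε₁/(n-2k+1) + (1/2)(k²(n-k)/(n(n-1)) - 1)·C(n,k)/C(n-k,k), γ₁ = -ε₁ - ((n-k)(n-2k+1)/(2n(n-1)))·C(n,k)/C(n-k,k), define u_j = (1/2)C(n-2,k-2) - ε₀λ₀(j) - ε₁λ₁(j) and v_j = δ_j - γ₀λ₀(j) - γ₁λ₁(j), where δ₀ = -(1/2)C(n,k) and δ_j = 0 otherwise. Then u₀ = v₀ = 0 and u₁ = -v₁ = (n/(2(n-k)))C(n-2,k-2) - ε₁·n·C(n-k-1,k-1)/(n-2k+1). -/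

import Mathlib

lemma auxB (m k : ℕ) (h1 : 1 ≤ k) (hk : k ≤ m) :
    m.choose k * k = (m - 1).choose (k - 1) * m := by
  obtain ⟨q, rfl⟩ : ∃ q, k = q + 1 := ⟨k - 1, by omega⟩
  obtain ⟨p, rfl⟩ : ∃ p, m = p + 1 := ⟨m - 1, by omega⟩
  simp only [Nat.add_sub_cancel]
  have h := Nat.add_one_mul_choose_eq p q
  zify at h ⊢
  linear_combination -h

lemma auxA (n k : ℕ) (h2 : 2 ≤ k) (hn : k ≤ n) :
    n.choose k * (k * (k - 1)) = (n - 2).choose (k - 2) * (n * (n - 1)) := by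
  obtain ⟨l, rfl⟩ : ∃ l, k = l + 2 := ⟨k - 2, by omega⟩
  obtain ⟨m, rfl⟩ : ∃ m, n = m + 2 := ⟨n - 2, by omega⟩
  simp only [Nat.add_sub_cancel]
  have h1 := Nat.add_one_mul_choose_eq m l
  have h2 := Nat.add_one_mul_choose_eq (m+1) (l+1)
  simp only [show l+2-1 = l+1 from rfl, show m+2-1 = m+1 from rfl]
  simp only [show m+1+1 = m+2 from rfl, show l+1+1 = l+2 from rfl] at h2
  zify at h1 h2 ⊢
  linear_combination -(((l:ℤ)+1) * h2 + ((m:ℤ)+2) * h1)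


set_option maxHeartbeats 2000000

/-- Johnson-scheme dual certificate: with the stated choices of ε₀, γ₀, γ₁ one has
u₀ = v₀ = 0 and u₁ = -v₁ = (n/(2(n-k)))C(n-2,k-2) - ε₁nC(n-k-1,k-1)/(n-2k+1). -/
theorem stmt_18 (n k : ℕ) (hk : 3 ≤ k) (hn : 3 * (k - 1) ≤ n) (ε₁ : ℝ)
    (lam0 lam1 : ℕ → ℝ)
    (hlam0 : ∀ j, lam0 j = (-1 : ℝ) ^ j * (Nat.choose (n - k - j) (k - j) : ℝ))
    (hlam1 : ∀ j, lam1 j = (-1 : ℝ) ^ j * (Nat.choose (n - k - j) (k - j) : ℝ) *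
      (((n : ℝ) - k - j + 1) * ((k : ℝ) - j) / ((n : ℝ) - 2 * k + 1) - k))
    (ε₀ γ₀ γ₁ : ℝ)
    (hε₀ : ε₀ = -((k : ℝ) ^ 2) * ε₁ / ((n : ℝ) - 2 * k + 1)
      + ((k : ℝ) * ((k : ℝ) - 1) / (2 * n * ((n : ℝ) - 1))) *
          ((Nat.choose n k : ℝ) / (Nat.choose (n - k) k : ℝ)))
    (hγ₀ : γ₀ = (k : ℝ) ^ 2 * ε₁ / ((n : ℝ) - 2 * k + 1)
      + (1 / 2) * ((k : ℝ) ^ 2 * ((n : ℝ) - k) / ((n : ℝ) * ((n : ℝ) - 1)) - 1) *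
          ((Nat.choose n k : ℝ) / (Nat.choose (n - k) k : ℝ)))
    (hγ₁ : γ₁ = -ε₁ - (((n : ℝ) - k) * ((n : ℝ) - 2 * k + 1) / (2 * n * ((n : ℝ) - 1))) *
          ((Nat.choose n k : ℝ) / (Nat.choose (n - k) k : ℝ)))
    (u v : ℕ → ℝ)
    (hu : ∀ j, u j = (1 / 2) * (Nat.choose (n - 2) (k - 2) : ℝ) - ε₀ * lam0 j - ε₁ * lam1 j)
    (hv : ∀ j, v j = (if j = 0 then -(1 / 2) * (Nat.choose n k : ℝ) else 0)
      - γ₀ * lam0 j - γ₁ * lam1 j) :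
    u 0 = 0 ∧ v 0 = 0 ∧
    u 1 = ((n : ℝ) / (2 * ((n : ℝ) - k))) * (Nat.choose (n - 2) (k - 2) : ℝ)
      - ε₁ * n * (Nat.choose (n - k - 1) (k - 1) : ℝ) / ((n : ℝ) - 2 * k + 1) ∧
    v 1 = -(((n : ℝ) / (2 * ((n : ℝ) - k))) * (Nat.choose (n - 2) (k - 2) : ℝ)
      - ε₁ * n * (Nat.choose (n - k - 1) (k - 1) : ℝ) / ((n : ℝ) - 2 * k + 1)) := by
  have hkn : 2 * k ≤ n := by omega
  have hkr : (3 : ℝ) ≤ (k : ℝ) := by exact_mod_cast hk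
  have hnr : 2 * (k : ℝ) ≤ (n : ℝ) := by exact_mod_cast hkn
  have hden : ((n : ℝ) - 2 * k + 1) ≠ 0 := by linarith
  have hn0 : (n : ℝ) ≠ 0 := by linarith
  have hn1 : ((n : ℝ) - 1) ≠ 0 := by linarith
  have hnk0 : ((n : ℝ) - k) ≠ 0 := by linarith
  have hnkk : k ≤ n - k := by omega
  have hCk : ((n - k).choose k : ℝ) ≠ 0 := by
    exact_mod_cast (Nat.choose_pos hnkk).ne'
  have ckn : ((n - k : ℕ) : ℝ) = (n : ℝ) - k := by
    have : k ≤ n := by omega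
    exact Nat.cast_sub this
  -- real versions of the binomial identities
  have rA : ((n - 2).choose (k - 2) : ℝ)
      = (n.choose k : ℝ) * ((k : ℝ) * ((k : ℝ) - 1)) / ((n : ℝ) * ((n : ℝ) - 1)) := by
    have h := auxA n k (by omega) (by omega)
    have hc : (↑(n.choose k * (k * (k - 1))) : ℝ) = ↑((n - 2).choose (k - 2) * (n * (n - 1))) := by
      exact_mod_cast congrArg (Nat.cast (R := ℝ)) h
    push_cast [Nat.cast_sub (show 1 ≤ k by omega), Nat.cast_sub (show 1 ≤ n by omega)] at hc
    field_simp
    linarith [hc]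
  have rB : ((n - k - 1).choose (k - 1) : ℝ)
      = ((n - k).choose k : ℝ) * (k : ℝ) / ((n : ℝ) - k) := by
    have h := auxB (n - k) k (by omega) hnkk
    have hc : (↑((n - k).choose k * k) : ℝ) = ↑((n - k - 1).choose (k - 1) * (n - k)) := by
      exact_mod_cast congrArg (Nat.cast (R := ℝ)) h
    push_cast [Nat.cast_sub (show 1 ≤ k by omega), ckn] at hc
    field_simp
    linarith [hc]
  have e0 : (n : ℕ) - k - 0 = n - k := rfl
  have e0' : k - 0 = k := rfl
  refine ⟨?_, ?_, ?_, ?_⟩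
  · rw [hu 0, hlam0 0, hlam1 0, hε₀, rA]
    norm_num
    field_simp
    ring
  · rw [hv 0, hlam0 0, hlam1 0, hγ₀, hγ₁]
    norm_num
    field_simp
    ring
  · rw [hu 1, hlam0 1, hlam1 1, hε₀, rA, rB]
    simp only [pow_one, Nat.cast_one]
    field_simp
    ring
  · rw [hv 1, hlam0 1, hlam1 1, hγ₀, hγ₁, rA, rB]
    simp only [pow_one, Nat.cast_one, if_neg one_ne_zero]
    field_simp
    field_simp [show (n:ℝ) - (k:ℝ) * 2 + 1 ≠ 0 by linarith]
    ring
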